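/- Let (Mⁿ,g,f,λ), n ≥ 3, be a gradient ρ-Einstein soliton. Then its Cotton tensor satisfies C_{ijk} = −((1 − 2(n−1)ρ)/(2(n−1)))·(∇ᵢR g_{jk} − ∇ⱼR g_{ik}) + R_{jikl}∇^l f. -/
import Mathlib

/-- The Cotton tensor of a gradient ρ-Einstein soliton (eq. (cotton_rho)):
C_{ijk} = −((1−2(n−1)ρ)/(2(n−1)))(∇ᵢR g_{jk} − ∇ⱼR g_{ik}) + R_{jikl}∇^l f.
Pointwise in an orthonormal frame (g = δ): C is defined from ∇Ric and ∇R, the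
soliton equation gives ∇ᵢR_{jk} = ρ∇ᵢR g_{jk} − ∇ᵢ∇ⱼ∇ₖf, and the Ricci identity is
∇ᵢ∇ⱼ∇ₖf − ∇ⱼ∇ᵢ∇ₖf = R_{ijkl}∇^l f. -/
theorem stmt_8 (n : ℕ) (hn : 3 ≤ n) (ρ lam : ℝ)
    (DRic D3f : Fin n → Fin n → Fin n → ℝ)
    (Rm : Fin n → Fin n → Fin n → Fin n → ℝ)
    (C : Fin n → Fin n → Fin n → ℝ)
    (dR gradf : Fin n → ℝ) (g : Fin n → Fin n → ℝ)
    (hg : ∀ i j, g i j = if i = j then 1 else 0)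
    (hC : ∀ i j k, C i j k = DRic i j k - DRic j i k
      - (1 / (2 * ((n : ℝ) - 1))) * (g j k * dR i - g i k * dR j))
    (hsolD : ∀ i j k, DRic i j k = ρ * dR i * g j k - D3f i j k)
    (hRicciId : ∀ i j k, D3f i j k - D3f j i k = ∑ l, Rm i j k l * gradf l) :
    ∀ i j k, C i j k =
      -((1 - 2 * ((n : ℝ) - 1) * ρ) / (2 * ((n : ℝ) - 1)))
          * (dR i * g j k - dR j * g i k)
        + ∑ l, Rm j i k l * gradf l := by
  intro i j k
  have hn1 : ((n : ℝ) - 1) ≠ 0 := by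
    have : (3 : ℝ) ≤ (n : ℝ) := by exact_mod_cast hn
    linarith
  have h := hRicciId j i k
  rw [hC, hsolD, hsolD, ← h]
  field_simp
  ring
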